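/- Let S be a set of k points in ℝ^d, and n = max{kd, d+1}. For any sets X₁,...,Xₙ ⊆ ℝ^d with S ⊆ conv(X_i) for all i, there is a choice of points x₁ ∈ X₁,...,xₙ ∈ Xₙ such that S ⊆ conv{x₁,...,xₙ}, in the special case k = 1 (the colorful Carathéodory theorem): if a point p lies in conv(X_i) for each of d+1 sets X₁,...,X_{d+1}, then there exist x_i ∈ X_i with p ∈ conv{x₁,...,x_{d+1}}. -/

import Mathlib

/-- In a convex hull of a finite set, the linear functional `⟪v, ·⟫` attains at `p` a value
at most its value at some point of the set. -/
lemma exists_inner_ge_aux {E : Type*} [NormedAddCommGroup E] [InnerProductSpace ℝ E]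
    (v : E) (s : Finset E) (p : E) (hp : p ∈ convexHull ℝ (s : Set E)) :
    ∃ y ∈ s, (inner ℝ v p : ℝ) ≤ (inner ℝ v y : ℝ) := by
  classical
  rw [Finset.mem_convexHull'] at hp
  obtain ⟨w, hw0, hw1, hwp⟩ := hp
  by_contra h
  push_neg at h
  set s' := s.filter (fun y => w y ≠ 0) with hs'
  have hsum' : ∑ y ∈ s', w y = 1 := by
    rw [hs', Finset.sum_filter_ne_zero]; exact hw1
  have hps' : ∑ y ∈ s', w y • y = p := by
    rw [hs', Finset.sum_filter_of_ne]
    · exact hwp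
    · intro y _ hy h0
      exact hy (by rw [h0, zero_smul])
  have hne : s'.Nonempty := by
    rw [← Finset.card_pos]
    by_contra hc
    push_neg at hc
    interval_cases h : s'.card
    · rw [Finset.card_eq_zero] at h
      rw [h, Finset.sum_empty] at hsum'
      norm_num at hsum'
  have hpv : (inner ℝ v p : ℝ) = ∑ y ∈ s', w y * (inner ℝ v y : ℝ) := by
    rw [← hps', inner_sum]
    simp [real_inner_smul_right]
  have hlt : ∑ y ∈ s', w y * (inner ℝ v y : ℝ) < ∑ y ∈ s', w y * (inner ℝ v p : ℝ) := by
    apply Finset.sum_lt_sum_of_nonempty hne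
    intro y hy
    have hys : y ∈ s := Finset.mem_of_mem_filter y hy
    have hy0 : 0 < w y :=
      lt_of_le_of_ne (hw0 y hys) (Ne.symm (Finset.mem_filter.mp hy).2)
    exact mul_lt_mul_of_pos_left (h y hys) hy0
  rw [← Finset.sum_mul, hsum', one_mul] at hlt
  linarith

/-- A finset of `ℝ^d` which is affinely independent and lies in the level set of a nonzero
linear functional `⟪v, ·⟫` has at most `d` elements. -/
lemma card_le_of_affineIndependent_in_hyperplane {d : ℕ}
    (v : EuclideanSpace ℝ (Fin d)) (hv : v ≠ 0) (c : ℝ)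
    (t : Finset (EuclideanSpace ℝ (Fin d)))
    (hind : AffineIndependent ℝ ((↑) : t → EuclideanSpace ℝ (Fin d)))
    (hlevel : ∀ z ∈ t, (inner ℝ v z : ℝ) = c) : t.card ≤ d := by
  classical
  rcases Finset.eq_empty_or_nonempty t with rfl | hne
  · simp
  obtain ⟨m, hm⟩ : ∃ m, t.card = m + 1 :=
    ⟨t.card - 1, (Nat.succ_pred_eq_of_pos (Finset.card_pos.mpr hne)).symm⟩
  set f : EuclideanSpace ℝ (Fin d) →ₗ[ℝ] ℝ := (innerSL ℝ v).toLinearMap with hf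
  have hker : vectorSpan ℝ (t : Set (EuclideanSpace ℝ (Fin d))) ≤ LinearMap.ker f := by
    rw [vectorSpan_def]
    rw [Submodule.span_le]
    rintro w ⟨z₁, hz₁, z₂, hz₂, rfl⟩
    simp only [SetLike.mem_coe, LinearMap.mem_ker, vsub_eq_sub, hf,
      ContinuousLinearMap.coe_coe, innerSL_apply_apply]
    have h1 := hlevel z₁ hz₁
    have h2 := hlevel z₂ hz₂
    rw [inner_sub_right, h1, h2, sub_self]
  have hfr : Module.finrank ℝ (vectorSpan ℝ (t : Set (EuclideanSpace ℝ (Fin d)))) = m := by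
    have hr : Set.range ((↑) : t → EuclideanSpace ℝ (Fin d)) = (t : Set (EuclideanSpace ℝ (Fin d))) :=
      Subtype.range_coe
    have := hind.finrank_vectorSpan (n := m) (by simp [hm])
    rw [hr] at this
    exact this
  have hkerlt : LinearMap.ker f < ⊤ := by
    rw [lt_top_iff_ne_top]
    intro h
    have : f v = 0 := by rw [← LinearMap.mem_ker, h]; trivial
    rw [hf] at this
    simp only [ContinuousLinearMap.coe_coe] at this
    have hvv : (inner ℝ v v : ℝ) = 0 := by simpa using this
    exact hv (inner_self_eq_zero.mp hvv)
  have h2 : Module.finrank ℝ (LinearMap.ker f) < d := by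
    have := Submodule.finrank_lt (K := ℝ) (V := EuclideanSpace ℝ (Fin d)) hkerlt.ne
    simpa [finrank_euclideanSpace_fin] using this
  have h3 := Submodule.finrank_mono hker
  omega

theorem stmt_17 (d : ℕ) (X : Fin (d + 1) → Set (EuclideanSpace ℝ (Fin d)))
    (p : EuclideanSpace ℝ (Fin d)) (hp : ∀ i, p ∈ convexHull ℝ (X i)) :
    ∃ x : Fin (d + 1) → EuclideanSpace ℝ (Fin d),
      (∀ i, x i ∈ X i) ∧ p ∈ convexHull ℝ (Set.range x) := by
  classical
  -- Step 1: reduce to finite subsets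
  have h1 : ∀ i, ∃ Y : Finset (EuclideanSpace ℝ (Fin d)),
      ↑Y ⊆ X i ∧ p ∈ convexHull ℝ (Y : Set (EuclideanSpace ℝ (Fin d))) := by
    intro i
    have h := hp i
    rw [convexHull_eq_union_convexHull_finite_subsets] at h
    simpa using h
  choose Y hYX hpY using h1
  -- Step 2: the finite set of transversals and the distance-minimizing one
  set T : Set (Fin (d + 1) → EuclideanSpace ℝ (Fin d)) :=
    Set.pi Set.univ (fun i => (Y i : Set (EuclideanSpace ℝ (Fin d)))) with hT
  have hTfin : T.Finite := Set.Finite.pi (fun i => (Y i).finite_toSet)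
  have hTne : T.Nonempty := by
    have hYne : ∀ i, ((Y i : Set (EuclideanSpace ℝ (Fin d)))).Nonempty := by
      intro i
      rcases convexHull_nonempty_iff.mp ⟨p, hpY i⟩ with ⟨z, hz⟩
      exact ⟨z, hz⟩
    exact ⟨fun i => (hYne i).choose, fun i _ => (hYne i).choose_spec⟩
  obtain ⟨x, hxT, hmin⟩ := Set.exists_min_image T
    (fun x => Metric.infDist p (convexHull ℝ (Set.range x))) hTfin hTne
  have hxT' : ∀ i, x i ∈ Y i := fun i => hxT i (Set.mem_univ i)
  -- Main claim: p lies in the hull of the minimizing transversal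
  have key : p ∈ convexHull ℝ (Set.range x) := by
    by_contra hpK
    set K : Set (EuclideanSpace ℝ (Fin d)) := convexHull ℝ (Set.range x) with hK
    have hKfin : (Set.range x).Finite := Set.finite_range x
    have hKcomp : IsCompact K := hKfin.isCompact_convexHull ℝ
    have hKclosed : IsClosed K := hKcomp.isClosed
    have hKne : K.Nonempty := by
      rw [hK, convexHull_nonempty_iff]
      exact Set.range_nonempty x
    -- the nearest point q and the positive distance
    obtain ⟨q, hqK, hq⟩ := hKcomp.exists_infDist_eq_dist hKne p
    have hdpos : 0 < Metric.infDist p K := by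
      rcases lt_or_eq_of_le (Metric.infDist_nonneg (s := K) (x := p)) with h | h
      · exact h
      · exact absurd ((hKclosed.mem_iff_infDist_zero hKne).mpr h.symm) hpK
    set v : EuclideanSpace ℝ (Fin d) := p - q with hv
    have hvnorm : ‖v‖ = Metric.infDist p K := by rw [hv, ← dist_eq_norm, hq]
    have hvpos : 0 < ‖v‖ := by rw [hvnorm]; exact hdpos
    have hvne : v ≠ 0 := by intro h; rw [h, norm_zero] at hvpos; exact lt_irrefl 0 hvpos
    -- obtuse-angle criterion for the nearest point
    have hproj : ∀ z ∈ K, (inner ℝ v (z - q) : ℝ) ≤ 0 := by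
      have heq : ‖p - q‖ = ⨅ w : K, ‖p - w‖ := by
        rw [← dist_eq_norm, ← hq, Metric.infDist_eq_iInf]
        simp_rw [dist_eq_norm]
      exact fun z hz =>
        (norm_eq_iInf_iff_real_inner_le_zero (convex_convexHull ℝ _) hqK).mp heq z hz
    -- a representation of q supported on the touching face
    set s : Finset (EuclideanSpace ℝ (Fin d)) := Finset.univ.image x with hs
    have hscoe : (s : Set (EuclideanSpace ℝ (Fin d))) = Set.range x := by
      rw [hs]; simp
    have hqs : q ∈ convexHull ℝ (s : Set (EuclideanSpace ℝ (Fin d))) := by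
      rw [hscoe]; exact hqK
    rw [Finset.mem_convexHull'] at hqs
    obtain ⟨w, hw0, hw1, hwq⟩ := hqs
    have hterm0 : ∀ y ∈ s, w y * (inner ℝ v (y - q) : ℝ) = 0 := by
      have hsum0 : ∑ y ∈ s, w y * (inner ℝ v (y - q) : ℝ) = 0 := by
        have hz0 : ∑ y ∈ s, w y • (y - q) = 0 := by
          have : ∑ y ∈ s, w y • (y - q) = (∑ y ∈ s, w y • y) - (∑ y ∈ s, w y) • q := by
            rw [Finset.sum_smul, ← Finset.sum_sub_distrib]
            congr 1
            funext y
            rw [smul_sub]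
          rw [this, hwq, hw1, one_smul, sub_self]
        calc ∑ y ∈ s, w y * (inner ℝ v (y - q) : ℝ)
            = (inner ℝ v (∑ y ∈ s, w y • (y - q)) : ℝ) := by
              rw [inner_sum]
              exact Finset.sum_congr rfl fun y _ => (real_inner_smul_right v (y - q) (w y)).symm
          _ = 0 := by rw [hz0, inner_zero_right]
      have hnonpos : ∀ y ∈ s, w y * (inner ℝ v (y - q) : ℝ) ≤ 0 := by
        intro y hy
        have h1 : y ∈ K := subset_convexHull ℝ _ (hscoe ▸ Finset.mem_coe.mpr hy)
        exact mul_nonpos_of_nonneg_of_nonpos (hw0 y hy) (hproj y h1)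
      intro y hy
      exact (Finset.sum_eq_zero_iff_of_nonpos hnonpos).mp hsum0 y hy
    set s' : Finset (EuclideanSpace ℝ (Fin d)) := s.filter (fun y => w y ≠ 0) with hs'
    have hface : ∀ y ∈ s', (inner ℝ v y : ℝ) = (inner ℝ v q : ℝ) := by
      intro y hy
      have hys : y ∈ s := Finset.mem_of_mem_filter y hy
      have hwy : w y ≠ 0 := (Finset.mem_filter.mp hy).2
      have := hterm0 y hys
      have h0 : (inner ℝ v (y - q) : ℝ) = 0 := by
        rcases mul_eq_zero.mp this with h | h
        · exact absurd h hwy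
        · exact h
      rw [inner_sub_right] at h0
      linarith
    have hqs' : q ∈ convexHull ℝ (s' : Set (EuclideanSpace ℝ (Fin d))) := by
      rw [Finset.mem_convexHull']
      refine ⟨w, fun y hy => hw0 y (Finset.mem_of_mem_filter y hy), ?_, ?_⟩
      · rw [hs', Finset.sum_filter_ne_zero]; exact hw1
      · rw [hs', Finset.sum_filter_of_ne]
        · exact hwq
        · intro y _ hy h0
          exact hy (by rw [h0, zero_smul])
    -- Caratheodory inside the face: q is in the hull of at most d of the points
    rw [convexHull_eq_union] at hqs'
    simp only [Set.mem_iUnion, exists_prop] at hqs'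
    obtain ⟨t, hts', htind, hqt⟩ := hqs'
    have htcard : t.card ≤ d := by
      refine card_le_of_affineIndependent_in_hyperplane v hvne (inner ℝ v q : ℝ) t htind ?_
      intro z hz
      exact hface z (hts' hz)
    -- choose an unused color i0
    set g : EuclideanSpace ℝ (Fin d) → Fin (d + 1) := fun a =>
      if h : ∃ i, x i = a then h.choose else 0 with hg
    have hgx : ∀ a ∈ t, x (g a) = a := by
      intro a ha
      have has : a ∈ Set.range x := by
        rw [← hscoe]
        exact Finset.mem_coe.mpr (Finset.mem_of_mem_filter a (hts' ha))
      obtain ⟨i, hi⟩ := has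
      rw [hg]
      simp only
      rw [dif_pos ⟨i, hi⟩]
      exact (⟨i, hi⟩ : ∃ i, x i = a).choose_spec
    obtain ⟨i0, hi0⟩ : ∃ i0 : Fin (d + 1), i0 ∉ t.image g := by
      by_contra h
      push_neg at h
      have h1 : (Finset.univ : Finset (Fin (d + 1))) ⊆ t.image g := fun i _ => h i
      have h2 := Finset.card_le_card h1
      have h3 := Finset.card_image_le (s := t) (f := g)
      rw [Finset.card_univ, Fintype.card_fin] at h2
      omega
    have htsub : (t : Set (EuclideanSpace ℝ (Fin d))) ⊆ x '' {i | i ≠ i0} := by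
      intro a ha
      have ha' : a ∈ t := Finset.mem_coe.mp ha
      refine ⟨g a, ?_, hgx a ha'⟩
      intro h
      exact hi0 (h ▸ Finset.mem_image_of_mem g ha')
    -- pick a better point y in color i0
    obtain ⟨y, hyY, hyineq⟩ := exists_inner_ge_aux v (Y i0) p (hpY i0)
    set x' := Function.update x i0 y with hx'
    have hx'T : x' ∈ T := by
      intro i _
      rw [hx']
      rcases eq_or_ne i i0 with rfl | h
      · rw [Function.update_self]; exact hyY
      · rw [Function.update_of_ne h]; exact hxT' i
    set K' : Set (EuclideanSpace ℝ (Fin d)) := convexHull ℝ (Set.range x') with hK'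
    have hqK' : q ∈ K' := by
      have h1 : x '' {i | i ≠ i0} ⊆ Set.range x' := by
        rintro _ ⟨i, hi, rfl⟩
        exact ⟨i, by rw [hx', Function.update_of_ne hi]⟩
      have h2 : q ∈ convexHull ℝ (x '' {i | i ≠ i0}) :=
        convexHull_mono htsub hqt
      exact convexHull_mono h1 h2
    have hyK' : y ∈ K' := subset_convexHull ℝ _ ⟨i0, by rw [hx', Function.update_self]⟩
    -- moving from q towards y strictly decreases the distance to p
    set u : EuclideanSpace ℝ (Fin d) := y - q with hu
    have hvu : ‖v‖ ^ 2 ≤ (inner ℝ v u : ℝ) := by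
      rw [hu, inner_sub_right]
      have : (inner ℝ v p : ℝ) - (inner ℝ v q : ℝ) = ‖v‖ ^ 2 := by
        rw [← inner_sub_right, ← hv, real_inner_self_eq_norm_sq]
      linarith
    have hvupos : 0 < (inner ℝ v u : ℝ) := lt_of_lt_of_le (by positivity) hvu
    have hune : u ≠ 0 := by
      intro h
      rw [h, inner_zero_right] at hvupos
      exact lt_irrefl 0 hvupos
    have hupos : 0 < ‖u‖ ^ 2 := pow_pos (norm_pos_iff.mpr hune) 2
    set t0 : ℝ := min 1 ((inner ℝ v u : ℝ) / ‖u‖ ^ 2) with ht0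
    have ht0pos : 0 < t0 := lt_min one_pos (div_pos hvupos hupos)
    have ht0le1 : t0 ≤ 1 := min_le_left _ _
    have ht0u : t0 * ‖u‖ ^ 2 ≤ (inner ℝ v u : ℝ) := by
      have := min_le_right 1 ((inner ℝ v u : ℝ) / ‖u‖ ^ 2)
      rw [← ht0] at this
      calc t0 * ‖u‖ ^ 2 ≤ ((inner ℝ v u : ℝ) / ‖u‖ ^ 2) * ‖u‖ ^ 2 :=
            mul_le_mul_of_nonneg_right this (le_of_lt hupos)
        _ = (inner ℝ v u : ℝ) := div_mul_cancel₀ _ (ne_of_gt hupos)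
    set z : EuclideanSpace ℝ (Fin d) := q + t0 • u with hz
    have hzK' : z ∈ K' := by
      have hcomb : z = (1 - t0) • q + t0 • y := by
        rw [hz, hu]
        module
      rw [hcomb]
      exact (convex_convexHull ℝ _) hqK' hyK' (by linarith) (le_of_lt ht0pos) (by ring)
    have hdistlt : dist p z < dist p q := by
      have hpz : p - z = v - t0 • u := by rw [hz, hv]; module
      have hsq : ‖v - t0 • u‖ ^ 2 = ‖v‖ ^ 2 - 2 * (t0 * (inner ℝ v u : ℝ)) + t0 ^ 2 * ‖u‖ ^ 2 := by
        rw [norm_sub_sq_real, real_inner_smul_right, norm_smul]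
        rw [Real.norm_eq_abs, abs_of_pos ht0pos]
        ring
      have hlt : ‖v - t0 • u‖ ^ 2 < ‖v‖ ^ 2 := by
        rw [hsq]
        nlinarith [mul_le_mul_of_nonneg_left ht0u (le_of_lt ht0pos),
          mul_lt_mul_of_pos_left hvupos ht0pos]
      have h1 : dist p z = ‖v - t0 • u‖ := by rw [dist_eq_norm, hpz]
      have h2 : dist p q = ‖v‖ := by rw [dist_eq_norm, ← hv]
      rw [h1, h2]
      exact lt_of_pow_lt_pow_left₀ 2 (norm_nonneg _) hlt
    -- contradiction with minimality
    have hle := hmin x' hx'T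
    have h1 : Metric.infDist p K' ≤ dist p z := Metric.infDist_le_dist_of_mem hzK'
    rw [hq, ← hK'] at hle
    linarith
  exact ⟨x, fun i => hYX i (hxT' i), key⟩
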